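/- Under the unique decoding regime, decoding is exact: let M = ∏_j (x−α_j)^{λ_j}, L = deg M, degree bounds d_f, d_g with d_f + d_g ≤ L + 1, and t < ⌊(L − d_f − d_g + 1)/2⌋. Let f/g be a reduced vector with deg f_i < d_f, deg g < d_g, gcd(g, M) = 1, and let R be a received word with interpolants R_i and error locator Λ (relative to the codeword of f/g) of degree ≤ t. Then every solution (φ, ψ_1, …, ψ_ℓ) ∈ F_q[x]^{ℓ+1} of the key equations ψ_i ≡ φ·R_i mod M with deg φ < d_g + t and deg ψ_i < d_f + t is a polynomial multiple of (Λg, Λf_1, …, Λf_ℓ). -/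

import Mathlib

open Polynomial

section Aux

variable {F : Type*} [Field F]

private lemma aux_pairwise {n : ℕ} (α : Fin n → F) (hα : Function.Injective α)
    (e : Fin n → ℕ) :
    ((Finset.univ : Finset (Fin n)) : Set (Fin n)).Pairwise
      (Function.onFun IsCoprime fun j => (X - C (α j)) ^ (e j)) := by
  intro j _ k _ hjk
  exact (isCoprime_X_sub_C_of_isUnit_sub
    (isUnit_iff_ne_zero.2 (sub_ne_zero.2 (fun h => hjk (hα h))))).pow

private lemma aux_natDegree_lt {p : F[X]} {d : ℕ} (hd : 0 < d)
    (h : p.degree < (d : ℕ)) : p.natDegree < d := by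
  rcases eq_or_ne p 0 with rfl | hp
  · simpa using hd
  · exact (natDegree_lt_iff_degree_lt hp).2 h

end Aux


/-- Unique decoding regime: if `t < ⌊(L − d_f − d_g + 1)/2⌋` (i.e. `2t + 2 ≤ L − d_f − d_g + 1`)
and the error locator `Λ` of the received word relative to the codeword of `f/g` has degree `≤ t`,
then every solution `(φ, ψ)` of the key equations `ψ_i ≡ φ R_i (mod M)` with the degree bounds is
a polynomial multiple of `(Λg, Λf_1, …, Λf_ℓ)`. -/
theorem unique_decoding {F : Type*} [Field F] [Fintype F] [DecidableEq F]
    (n ℓ : ℕ) [NeZero ℓ]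
    (α : Fin n → F) (hα : Function.Injective α)
    (lam : Fin n → ℕ) (hlam : ∀ j, 0 < lam j)
    (M : F[X]) (hM : M = ∏ j, (X - C (α j)) ^ lam j)
    (L : ℕ) (hL : L = M.natDegree)
    (df dg t : ℕ) (hdf : 0 < df) (hdg : 0 < dg) (hsum : df + dg ≤ L + 1)
    (ht : 2 * (t : ℤ) + 2 ≤ (L : ℤ) - df - dg + 1)
    (f : Fin ℓ → F[X]) (g : F[X]) (hg : g ≠ 0)
    (hdegf : ∀ i, (f i).degree < (df : ℕ)) (hdegg : g.degree < (dg : ℕ))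
    (hred : gcd (Finset.univ.gcd f) g = 1)
    (hgM : IsCoprime g M)
    -- `R i` is the CRT interpolant of row `i` of the received word
    (R : Fin ℓ → F[X])
    -- `μ j` is the truncated valuation of error column `j`
    (μ : Fin n → ℕ)
    (hμ : ∀ j, μ j = min (lam j) (Finset.univ.inf' Finset.univ_nonempty
        (fun i => if g * R i - f i = 0 then lam j
          else rootMultiplicity (α j) (g * R i - f i))))
    (Λ : F[X]) (hΛ : Λ = ∏ j, (X - C (α j)) ^ (lam j - μ j))
    (hΛt : Λ.natDegree ≤ t) :
    ∀ (φ : F[X]) (ψ : Fin ℓ → F[X]),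
      (∀ i, M ∣ (φ * R i - ψ i)) →
      φ.degree < (dg + t : ℕ) → (∀ i, (ψ i).degree < (df + t : ℕ)) →
      ∃ p : F[X], φ = p * (Λ * g) ∧ ∀ i, ψ i = p * (Λ * f i) := by
  intro φ ψ hkey hφdeg hψdeg
  classical
  -- basic facts
  have hMmonic : M.Monic := by
    rw [hM]; exact monic_prod_of_monic _ _ fun j _ => (monic_X_sub_C _).pow _
  have hΛmonic : Λ.Monic := by
    rw [hΛ]; exact monic_prod_of_monic _ _ fun j _ => (monic_X_sub_C _).pow _
  have hμle : ∀ j, μ j ≤ lam j := fun j => (hμ j) ▸ min_le_left _ _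
  set N : F[X] := ∏ j, (X - C (α j)) ^ (μ j) with hN
  have hMfact : M = Λ * N := by
    rw [hM, hΛ, hN, ← Finset.prod_mul_distrib]
    refine Finset.prod_congr rfl fun j _ => ?_
    rw [← pow_add]
    congr 1
    have := hμle j
    omega
  -- N divides each g * R i - f i
  have hNdvd : ∀ i, N ∣ g * R i - f i := by
    intro i
    rcases eq_or_ne (g * R i - f i) 0 with h0 | h0
    · rw [h0]; exact dvd_zero _
    · refine Finset.prod_dvd_of_coprime (aux_pairwise α hα μ) fun j _ => ?_
      have hle : μ j ≤ rootMultiplicity (α j) (g * R i - f i) := by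
        have h1 : μ j ≤ (Finset.univ.inf' Finset.univ_nonempty
            (fun i => if g * R i - f i = 0 then lam j
              else rootMultiplicity (α j) (g * R i - f i))) :=
          (hμ j) ▸ min_le_right _ _
        have h2 := Finset.inf'_le (b := i)
          (fun i => if g * R i - f i = 0 then lam j
            else rootMultiplicity (α j) (g * R i - f i)) (Finset.mem_univ i)
        rw [if_neg h0] at h2
        exact le_trans h1 h2
      exact dvd_trans (pow_dvd_pow _ hle) (pow_rootMultiplicity_dvd _ _)
  -- Step 1: the key equations force g * ψ i = φ * f i
  have hE : ∀ i, g * ψ i = φ * f i := by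
    intro i
    by_contra hne
    have hEne : g * ψ i - φ * f i ≠ 0 := sub_ne_zero.2 hne
    have hu : M ∣ Λ * (g * ψ i - φ * f i) := by
      have h1 : M ∣ φ * (Λ * (g * R i - f i)) := by
        rw [hMfact]
        exact Dvd.dvd.mul_left (mul_dvd_mul_left Λ (hNdvd i)) φ
      have h2 : M ∣ Λ * g * (φ * R i - ψ i) := Dvd.dvd.mul_left (hkey i) _
      have h3 : Λ * (g * ψ i - φ * f i)
          = φ * (Λ * (g * R i - f i)) - Λ * g * (φ * R i - ψ i) := by ring
      rw [h3]
      exact dvd_sub h1 h2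
    have huneg : Λ * (g * ψ i - φ * f i) ≠ 0 := mul_ne_zero hΛmonic.ne_zero hEne
    have hLle : L ≤ (Λ * (g * ψ i - φ * f i)).natDegree :=
      hL ▸ natDegree_le_of_dvd hu huneg
    have hb1 : (Λ * (g * ψ i - φ * f i)).natDegree
        ≤ Λ.natDegree + (g * ψ i - φ * f i).natDegree := natDegree_mul_le
    have hb2 : (g * ψ i - φ * f i).natDegree
        ≤ max (g * ψ i).natDegree (φ * f i).natDegree := natDegree_sub_le _ _
    have hb3 : (g * ψ i).natDegree ≤ g.natDegree + (ψ i).natDegree := natDegree_mul_le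
    have hb4 : (φ * f i).natDegree ≤ φ.natDegree + (f i).natDegree := natDegree_mul_le
    have hg' : g.natDegree < dg := aux_natDegree_lt hdg hdegg
    have hψ' : (ψ i).natDegree < df + t := aux_natDegree_lt (by omega) (hψdeg i)
    have hφ' : φ.natDegree < dg + t := aux_natDegree_lt (by omega) hφdeg
    have hf' : (f i).natDegree < df := aux_natDegree_lt hdf (hdegf i)
    omega
  -- Step 2: g divides φ
  have hcop : IsCoprime (Finset.univ.gcd f) g :=
    (gcd_isUnit_iff _ _).mp (hred ▸ isUnit_one)
  have hgdvd : g ∣ φ := by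
    have h1 : g ∣ Finset.univ.gcd (fun i => φ * f i) :=
      Finset.dvd_gcd fun i _ => (hE i) ▸ dvd_mul_right g (ψ i)
    rw [Finset.gcd_mul_left] at h1
    have h2 : g ∣ normalize φ * Finset.univ.gcd f := h1
    have h3 : g ∣ normalize φ := hcop.symm.dvd_of_dvd_mul_right h2
    exact (dvd_normalize_iff).mp h3
  obtain ⟨q, hq⟩ := hgdvd
  have hψq : ∀ i, ψ i = q * f i := by
    intro i
    have := hE i
    rw [hq] at this
    apply mul_left_cancel₀ hg
    rw [this]; ring
  rcases eq_or_ne q 0 with rfl | hq0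
  · refine ⟨0, ?_, fun i => ?_⟩
    · simp [hq]
    · simp [hψq i]
  -- Step 3: Λ divides q
  have hΛq : Λ ∣ q := by
    rw [hΛ]
    refine Finset.prod_dvd_of_coprime (aux_pairwise α hα _) fun j _ => ?_
    rcases Nat.eq_zero_or_pos (lam j - μ j) with h0 | hpos
    · rw [h0, pow_zero]; exact one_dvd q
    · obtain ⟨i0, _, hi0⟩ := Finset.exists_mem_eq_inf'
        (Finset.univ_nonempty (α := Fin ℓ))
        (fun i => if g * R i - f i = 0 then lam j
          else rootMultiplicity (α j) (g * R i - f i))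
      have hμj : μ j = min (lam j) (if g * R i0 - f i0 = 0 then lam j
          else rootMultiplicity (α j) (g * R i0 - f i0)) := by
        rw [hμ j, hi0]
      have hμlt : μ j < lam j := by
        have := hμle j; omega
      have hne : g * R i0 - f i0 ≠ 0 := by
        intro h0'
        rw [if_pos h0'] at hμj
        omega
      rw [if_neg hne] at hμj
      have hdvdM : M ∣ q * (g * R i0 - f i0) := by
        have h1 := hkey i0
        rw [hq, hψq i0] at h1
        have h2 : g * q * R i0 - q * f i0 = q * (g * R i0 - f i0) := by ring
        rwa [h2] at h1
      have hpowM : (X - C (α j)) ^ lam j ∣ M := by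
        rw [hM]; exact Finset.dvd_prod_of_mem _ (Finset.mem_univ j)
      have hdvd2 : (X - C (α j)) ^ lam j ∣ q * (g * R i0 - f i0) :=
        dvd_trans hpowM hdvdM
      have hmulne : q * (g * R i0 - f i0) ≠ 0 := mul_ne_zero hq0 hne
      have hrm : lam j ≤ rootMultiplicity (α j) (q * (g * R i0 - f i0)) :=
        (le_rootMultiplicity_iff hmulne).2 hdvd2
      rw [rootMultiplicity_mul hmulne] at hrm
      have hfin : lam j - μ j ≤ rootMultiplicity (α j) q := by omega
      exact dvd_trans (pow_dvd_pow _ hfin) (pow_rootMultiplicity_dvd _ _)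
  obtain ⟨p, hp⟩ := hΛq
  refine ⟨p, ?_, fun i => ?_⟩
  · rw [hq, hp]; ring
  · rw [hψq i, hp]; ring
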